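/- Let c > 0, ρ > 0, and d ∈ R^n with d ≠ 0. Every minimizer y of the function G(y) = c/‖y‖₂ + (ρ/2)·‖y − d‖₂² over y ∈ R^n \ {0} has the form y = τ d, where τ > 0 is the unique real root of τ³ − τ² − D = 0 with D = c/(ρ‖d‖₂³). -/

import Mathlib

open Finset

theorem stmt12 (n : ℕ) (c ρ : ℝ) (hc : 0 < c) (hρ : 0 < ρ)
    (d : Fin n → ℝ) (hd : d ≠ 0)
    (y : Fin n → ℝ) (hy : y ≠ 0)
    (hmin : ∀ z : Fin n → ℝ, z ≠ 0 →
      c / Real.sqrt (∑ i, (y i) ^ 2) + ρ / 2 * (∑ i, (y i - d i) ^ 2) ≤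
        c / Real.sqrt (∑ i, (z i) ^ 2) + ρ / 2 * (∑ i, (z i - d i) ^ 2)) :
    ∃ τ : ℝ, 0 < τ ∧ y = τ • d ∧
      τ ^ 3 - τ ^ 2 - c / (ρ * (Real.sqrt (∑ i, (d i) ^ 2)) ^ 3) = 0 := by
  -- Move to Euclidean space
  set Y : EuclideanSpace ℝ (Fin n) := WithLp.toLp 2 y with hY
  set D : EuclideanSpace ℝ (Fin n) := WithLp.toLp 2 d with hD
  have hYne : Y ≠ 0 := fun h => hy (by simpa [hY] using congrArg WithLp.ofLp h)
  have hDne : D ≠ 0 := fun h => hd (by simpa [hD] using congrArg WithLp.ofLp h)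
  have hnorm : ∀ x : EuclideanSpace ℝ (Fin n),
      Real.sqrt (∑ i, (x i) ^ 2) = ‖x‖ := by
    intro x
    rw [EuclideanSpace.norm_eq]
    congr 1
    apply Finset.sum_congr rfl
    intro i _
    rw [Real.norm_eq_abs, sq_abs]
  have hsq : ∀ x : EuclideanSpace ℝ (Fin n), (∑ i, (x i) ^ 2) = ‖x‖ ^ 2 := by
    intro x
    rw [← hnorm, Real.sq_sqrt]
    positivity
  have hsub : ∀ (a b : EuclideanSpace ℝ (Fin n)),
      (∑ i, (a i - b i) ^ 2) = ‖a - b‖ ^ 2 := by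
    intro a b
    rw [← hsq (a - b)]
    rfl
  have hmin' : ∀ z : EuclideanSpace ℝ (Fin n), z ≠ 0 →
      c / ‖Y‖ + ρ / 2 * ‖Y - D‖ ^ 2 ≤ c / ‖z‖ + ρ / 2 * ‖z - D‖ ^ 2 := by
    intro z hz
    have := hmin z.ofLp (fun h => hz (by simpa using congrArg (WithLp.toLp 2) h))
    change c / Real.sqrt (∑ i, (Y i) ^ 2) + ρ / 2 * (∑ i, (Y i - D i) ^ 2) ≤
      c / Real.sqrt (∑ i, (z i) ^ 2) + ρ / 2 * (∑ i, (z i - D i) ^ 2) at this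
    rwa [hnorm, hnorm, hsub, hsub] at this
  have hYpos : (0:ℝ) < ‖Y‖ := norm_pos_iff.mpr hYne
  have hDpos : (0:ℝ) < ‖D‖ := norm_pos_iff.mpr hDne
  set τ : ℝ := ‖Y‖ / ‖D‖ with hτ
  have hτpos : 0 < τ := div_pos hYpos hDpos
  -- Step 1: inner Y D ≥ ‖Y‖ * ‖D‖
  have hz0 : τ • D ≠ 0 := smul_ne_zero (ne_of_gt hτpos) hDne
  have hznorm : ‖τ • D‖ = ‖Y‖ := by
    rw [norm_smul, Real.norm_eq_abs, abs_of_pos hτpos, hτ,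
      div_mul_cancel₀ _ (ne_of_gt hDpos)]
  have hzsub : ‖τ • D - D‖ ^ 2 = (‖Y‖ - ‖D‖) ^ 2 := by
    have : τ • D - D = (τ - 1) • D := by rw [sub_smul, one_smul]
    rw [this, norm_smul, Real.norm_eq_abs, mul_pow, sq_abs, hτ]
    field_simp
  have key := hmin' (τ • D) hz0
  rw [hznorm, hzsub] at key
  have hineq : ‖Y - D‖ ^ 2 ≤ (‖Y‖ - ‖D‖) ^ 2 := by nlinarith
  have hexp : ‖Y - D‖ ^ 2 = ‖Y‖ ^ 2 - 2 * inner ℝ Y D + ‖D‖ ^ 2 :=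
    norm_sub_sq_real Y D
  have hCS : inner ℝ Y D ≤ ‖Y‖ * ‖D‖ := real_inner_le_norm Y D
  have hinner : (inner ℝ Y D : ℝ) = ‖Y‖ * ‖D‖ := by nlinarith
  have hsmul : ‖D‖ • Y = ‖Y‖ • D := inner_eq_norm_mul_iff_real.mp hinner
  have hYτD : Y = τ • D := by
    have := congrArg (fun v : EuclideanSpace ℝ (Fin n) => (‖D‖)⁻¹ • v) hsmul
    simpa [smul_smul, inv_mul_cancel₀ (ne_of_gt hDpos), hτ, div_eq_inv_mul]
      using this
  -- Step 2: derivative at τ vanishes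
  set R : ℝ := ‖D‖ with hR
  set f : ℝ → ℝ := fun t => c / (t * R) + ρ / 2 * ((t - 1) ^ 2 * R ^ 2) with hf
  have hfval : ∀ t : ℝ, 0 < t → f t = c / ‖t • D‖ + ρ / 2 * ‖t • D - D‖ ^ 2 := by
    intro t ht
    have h1 : ‖t • D‖ = t * R := by
      rw [norm_smul, Real.norm_eq_abs, abs_of_pos ht]
    have h2 : ‖t • D - D‖ ^ 2 = (t - 1) ^ 2 * R ^ 2 := by
      have : t • D - D = (t - 1) • D := by rw [sub_smul, one_smul]
      rw [this, norm_smul, Real.norm_eq_abs, mul_pow, sq_abs]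
    rw [hf, h1, h2]
  have hlocmin : IsLocalMin f τ := by
    have hmem : Set.Ioi (0:ℝ) ∈ nhds τ := isOpen_Ioi.mem_nhds hτpos
    filter_upwards [hmem] with t ht
    have hfτ : f τ = c / ‖Y‖ + ρ / 2 * ‖Y - D‖ ^ 2 := by
      rw [hfval τ hτpos, ← hYτD]
    rw [hfτ, hfval t ht]
    exact hmin' (t • D) (smul_ne_zero (ne_of_gt ht) hDne)
  have hd1 : HasDerivAt f
      ((0 * (τ * R) - c * (1 * R)) / (τ * R) ^ 2
        + ρ / 2 * (((2:ℝ) * (τ - 1) ^ 1 * 1) * R ^ 2)) τ := by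
    apply HasDerivAt.add
    · exact (hasDerivAt_const τ c).div ((hasDerivAt_id τ).mul_const R)
        (by positivity)
    · exact ((((hasDerivAt_id τ).sub_const 1).pow 2).mul_const (R ^ 2)).const_mul (ρ / 2)
  have hderiv0 := hlocmin.hasDerivAt_eq_zero hd1
  refine ⟨τ, hτpos, by simpa [hY, hD] using congrArg WithLp.ofLp hYτD, ?_⟩
  rw [show Real.sqrt (∑ i, (d i) ^ 2) = ‖D‖ from hnorm D, ← hR]
  have hRne : R ≠ 0 := ne_of_gt hDpos
  have hτne : τ ≠ 0 := ne_of_gt hτpos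
  have hρne : ρ ≠ 0 := ne_of_gt hρ
  have hkey : ρ * (τ - 1) * τ ^ 2 * R ^ 4 = c * R := by
    field_simp at hderiv0
    linear_combination R * hderiv0
  have hkey2 : ρ * (τ - 1) * τ ^ 2 * R ^ 3 = c :=
    mul_right_cancel₀ hRne (by linear_combination hkey)
  field_simp
  linear_combination hkey2
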